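/- arXiv:2509.11775 — 2 statements merged into one kernel-verified Lean document; each statement's English description precedes it below -/
import Mathlib

section
/- Let G = (V,E) be a simple undirected graph and let S = {S₁, …, S_k} be an m-separated collection of subsets of V with m ≥ 2. For each i, let L*(S_i) denote a minimum liar's vertex-edge dominating set of the edges of the subgraph of G induced by S_i (where domination is taken with closed neighbourhoods in G), and let L*(V) be a minimum liar's vertex-edge dominating set of G. Then Σ_{i=1}^{k} |L*(S_i)| ≤ |L*(V)|. -/
open SimpleGraph Set

/-- The closed neighbourhood of an edge `e = uv`: `N_G[u] ∪ N_G[v]`. -/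
def edgeNbhd {V : Type*} (G : SimpleGraph V) (e : Sym2 V) : Set V :=
  {x | ∃ y ∈ e, x = y ∨ G.Adj y x}

/-- `L` is a liar's vertex-edge dominating set of the edge set `F` (neighbourhoods in `G`). -/
def IsLiarVEDomOf {V : Type*} (G : SimpleGraph V) (F : Set (Sym2 V)) (L : Set V) : Prop :=
  (∀ e ∈ F, 2 ≤ (edgeNbhd G e ∩ L).ncard) ∧
  (∀ e ∈ F, ∀ e' ∈ F, e ≠ e' →
    3 ≤ ((edgeNbhd G e ∪ edgeNbhd G e') ∩ L).ncard)

/-- `L` is a liar's vertex-edge dominating set of `G`. -/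
def IsLiarVEDom {V : Type*} (G : SimpleGraph V) (L : Set V) : Prop :=
  IsLiarVEDomOf G G.edgeSet L

/-- Edges of the subgraph of `G` induced by `S`. -/
def inducedEdges {V : Type*} (G : SimpleGraph V) (S : Set V) : Set (Sym2 V) :=
  {e ∈ G.edgeSet | ∀ x ∈ e, x ∈ S}

theorem stmt_2 {V : Type*} [Fintype V] (G : SimpleGraph V) (m : ℕ) (hm : 2 ≤ m)
    (k : ℕ) (S : Fin k → Set V)
    (hdisj : ∀ i j, i ≠ j → Disjoint (S i) (S j))
    (hsep : ∀ i j, i ≠ j → ∀ u ∈ S i, ∀ v ∈ S j, (m : ℕ∞) < G.edist u v)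
    (Lopt : Fin k → Set V)
    (hLopt : ∀ i, IsLiarVEDomOf G (inducedEdges G (S i)) (Lopt i))
    (hLoptMin : ∀ i, ∀ L' : Set V, IsLiarVEDomOf G (inducedEdges G (S i)) L' →
      (Lopt i).ncard ≤ L'.ncard)
    (LV : Set V) (hLV : IsLiarVEDom G LV)
    (hLVMin : ∀ L' : Set V, IsLiarVEDom G L' → LV.ncard ≤ L'.ncard) :
    ∑ i : Fin k, (Lopt i).ncard ≤ LV.ncard := by
  classical
  -- the closed neighbourhood of each S i
  set T : Fin k → Set V := fun i => {x | ∃ y ∈ S i, x = y ∨ G.Adj y x} with hT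
  have hsub : ∀ i, ∀ e ∈ inducedEdges G (S i), edgeNbhd G e ⊆ T i := by
    intro i e he x hx
    obtain ⟨y, hy, hxy⟩ := hx
    exact ⟨y, he.2 y hy, hxy⟩
  have hdom : ∀ i, IsLiarVEDomOf G (inducedEdges G (S i)) (LV ∩ T i) := by
    intro i
    constructor
    · intro e he
      have heq : edgeNbhd G e ∩ (LV ∩ T i) = edgeNbhd G e ∩ LV := by
        ext x
        constructor
        · rintro ⟨h1, h2, _⟩; exact ⟨h1, h2⟩
        · rintro ⟨h1, h2⟩; exact ⟨h1, h2, hsub i e he h1⟩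
      rw [heq]
      exact hLV.1 e he.1
    · intro e he e' he' hne
      have heq : (edgeNbhd G e ∪ edgeNbhd G e') ∩ (LV ∩ T i)
          = (edgeNbhd G e ∪ edgeNbhd G e') ∩ LV := by
        ext x
        constructor
        · rintro ⟨h1, h2, _⟩; exact ⟨h1, h2⟩
        · rintro ⟨h1, h2⟩
          refine ⟨h1, h2, ?_⟩
          rcases h1 with h | h
          · exact hsub i e he h
          · exact hsub i e' he' h
      rw [heq]
      exact hLV.2 e he.1 e' he'.1 hne
  have hle : ∀ i, (Lopt i).ncard ≤ (LV ∩ T i).ncard :=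
    fun i => hLoptMin i _ (hdom i)
  -- the T i are pairwise disjoint since m ≥ 2
  have hTdisj : ∀ i j, i ≠ j → Disjoint (T i) (T j) := by
    intro i j hij
    rw [Set.disjoint_left]
    rintro x ⟨u, hu, hxu⟩ ⟨v, hv, hxv⟩
    have hux : G.edist u x ≤ 1 := by
      rcases hxu with rfl | h
      · simp [SimpleGraph.edist_self]
      · have := G.edist_le (SimpleGraph.Walk.cons h SimpleGraph.Walk.nil)
        simpa using this
    have hxv : G.edist x v ≤ 1 := by
      rcases hxv with rfl | h
      · simp [SimpleGraph.edist_self]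
      · have := G.edist_le (SimpleGraph.Walk.cons h SimpleGraph.Walk.nil).reverse
        simpa using this
    have h2 : G.edist u v ≤ 2 := by
      calc G.edist u v ≤ G.edist u x + G.edist x v := G.edist_triangle
        _ ≤ 1 + 1 := add_le_add hux hxv
        _ = 2 := by norm_num
    have hlt := hsep i j hij u hu v hv
    have hm2 : (2 : ℕ∞) ≤ (m : ℕ∞) := by exact_mod_cast hm
    exact absurd (lt_of_le_of_lt (h2.trans hm2) hlt) (lt_irrefl _)
  -- sum up disjoint pieces of LV
  have hfin : LV.Finite := Set.toFinite _
  have hsum : ∑ i : Fin k, (LV ∩ T i).ncard ≤ LV.ncard := by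
    classical
    have hfins : ∀ i, (LV ∩ T i).Finite := fun i => Set.toFinite _
    have hdisjF : ((Finset.univ : Finset (Fin k)) : Set (Fin k)).PairwiseDisjoint
        (fun i => (hfins i).toFinset) := by
      intro i _ j _ hij
      simp only [Finset.disjoint_left, Set.Finite.mem_toFinset]
      intro a ha ha'
      exact (hTdisj i j hij).le_bot ⟨ha.2, ha'.2⟩
    have hcard : ∑ i : Fin k, (hfins i).toFinset.card
        = ((Finset.univ : Finset (Fin k)).biUnion fun i => (hfins i).toFinset).card :=
      (Finset.card_biUnion (fun i hi j hj hij => hdisjF hi hj hij)).symm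
    have hsubF : ((Finset.univ : Finset (Fin k)).biUnion fun i => (hfins i).toFinset)
        ⊆ hfin.toFinset := by
      intro a ha
      simp only [Finset.mem_biUnion, Set.Finite.mem_toFinset] at ha ⊢
      obtain ⟨i, _, hai, _⟩ := ha
      exact hai
    calc ∑ i : Fin k, (LV ∩ T i).ncard
        = ∑ i : Fin k, (hfins i).toFinset.card := by
          refine Finset.sum_congr rfl fun i _ => ?_
          exact Set.ncard_eq_toFinset_card _ (hfins i)
      _ ≤ hfin.toFinset.card := hcard ▸ Finset.card_le_card hsubF
      _ = LV.ncard := (Set.ncard_eq_toFinset_card _ hfin).symm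
  calc ∑ i : Fin k, (Lopt i).ncard ≤ ∑ i : Fin k, (LV ∩ T i).ncard :=
        Finset.sum_le_sum fun i _ => hle i
    _ ≤ LV.ncard := hsum
end

section
/- Let G = (V,E) be a simple graph, let {S₁,…,S_k} be an m-separated collection of subsets of V with m ≥ 2, and let {T₁,…,T_k} be subsets of V with S_i ⊆ T_i for each i. Suppose there exists ρ ≥ 1 such that |L*(T_i)| ≤ ρ·|L*(S_i)| for every i, and suppose ⋃_{i=1}^{k} L*(T_i) is a liar's ve-dominating set of G. Then Σ_{i=1}^{k} |L*(T_i)| ≤ ρ·|L*(V)|, where L*(V) is a minimum liar's ve-dominating set of G. -/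
open SimpleGraph Set

theorem stmt_3 {V : Type*} [Fintype V] (G : SimpleGraph V) (m : ℕ) (hm : 2 ≤ m)
    (k : ℕ) (S T : Fin k → Set V)
    (hdisj : ∀ i j, i ≠ j → Disjoint (S i) (S j))
    (hsep : ∀ i j, i ≠ j → ∀ u ∈ S i, ∀ v ∈ S j, (m : ℕ∞) < G.edist u v)
    (hST : ∀ i, S i ⊆ T i)
    (LS : Fin k → Set V)
    (hLS : ∀ i, IsLiarVEDomOf G (inducedEdges G (S i)) (LS i))
    (hLSMin : ∀ i, ∀ L' : Set V, IsLiarVEDomOf G (inducedEdges G (S i)) L' →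
      (LS i).ncard ≤ L'.ncard)
    (LT : Fin k → Set V)
    (hLT : ∀ i, IsLiarVEDomOf G (inducedEdges G (T i)) (LT i))
    (hLTMin : ∀ i, ∀ L' : Set V, IsLiarVEDomOf G (inducedEdges G (T i)) L' →
      (LT i).ncard ≤ L'.ncard)
    (ρ : ℝ) (hρ : 1 ≤ ρ)
    (hratio : ∀ i, ((LT i).ncard : ℝ) ≤ ρ * (LS i).ncard)
    (hunion : IsLiarVEDom G (⋃ i, LT i))
    (LV : Set V) (hLV : IsLiarVEDom G LV)
    (hLVMin : ∀ L' : Set V, IsLiarVEDom G L' → LV.ncard ≤ L'.ncard) :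
    (∑ i : Fin k, ((LT i).ncard : ℝ)) ≤ ρ * LV.ncard := by
  classical
  -- closed ball of radius 1 around S i
  set B : Fin k → Set V := fun i => {x | ∃ s ∈ S i, x = s ∨ G.Adj s x} with hB
  -- edge neighbourhoods of induced edges are inside B i
  have hnb : ∀ i, ∀ e ∈ inducedEdges G (S i), edgeNbhd G e ⊆ B i := by
    rintro i e ⟨he, hmem⟩ x ⟨y, hy, hxy⟩
    exact ⟨y, hmem y hy, hxy⟩
  -- the balls are pairwise disjoint
  have hBdisj : ∀ i j, i ≠ j → Disjoint (B i) (B j) := by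
    intro i j hij
    rw [Set.disjoint_left]
    rintro x ⟨s, hs, hxs⟩ ⟨t, ht, hxt⟩
    have h1 : G.edist s x ≤ 1 := by
      rcases hxs with rfl | h
      · simp
      · exact le_trans (SimpleGraph.edist_le (SimpleGraph.Walk.cons h SimpleGraph.Walk.nil))
          (by simp)
    have h2 : G.edist x t ≤ 1 := by
      rw [SimpleGraph.edist_comm]
      rcases hxt with rfl | h
      · simp
      · exact le_trans (SimpleGraph.edist_le (SimpleGraph.Walk.cons h SimpleGraph.Walk.nil))
          (by simp)
    have htri : G.edist s t ≤ 2 :=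
      le_trans (SimpleGraph.edist_triangle (v := x)) (by
        calc G.edist s x + G.edist x t ≤ 1 + 1 := add_le_add h1 h2
        _ = 2 := by norm_num)
    have := hsep i j hij s hs t ht
    have hm2 : (2 : ℕ∞) ≤ (m : ℕ∞) := by exact_mod_cast hm
    exact absurd this (not_lt.mpr (htri.trans hm2))
  -- LV ∩ B i is a liar's ve-dom of inducedEdges G (S i)
  have hdomi : ∀ i, IsLiarVEDomOf G (inducedEdges G (S i)) (LV ∩ B i) := by
    intro i
    constructor
    · intro e he
      have : edgeNbhd G e ∩ (LV ∩ B i) = edgeNbhd G e ∩ LV := by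
        ext x
        constructor
        · rintro ⟨h1, h2, _⟩; exact ⟨h1, h2⟩
        · rintro ⟨h1, h2⟩; exact ⟨h1, h2, hnb i e he h1⟩
      rw [this]
      exact hLV.1 e he.1
    · intro e he e' he' hne
      have : (edgeNbhd G e ∪ edgeNbhd G e') ∩ (LV ∩ B i)
          = (edgeNbhd G e ∪ edgeNbhd G e') ∩ LV := by
        ext x
        constructor
        · rintro ⟨h1, h2, _⟩; exact ⟨h1, h2⟩
        · rintro ⟨h1, h2⟩
          refine ⟨h1, h2, ?_⟩
          rcases h1 with h1 | h1
          · exact hnb i e he h1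
          · exact hnb i e' he' h1
      rw [this]
      exact hLV.2 e he.1 e' he'.1 hne
  -- sum of |LS i| ≤ |LV|
  have key : (∑ i : Fin k, (LS i).ncard) ≤ LV.ncard := by
    have hsub : ∀ i, (LS i).ncard ≤ (LV ∩ B i).ncard := fun i =>
      hLSMin i _ (hdomi i)
    calc (∑ i : Fin k, (LS i).ncard) ≤ ∑ i : Fin k, (LV ∩ B i).ncard :=
          Finset.sum_le_sum fun i _ => hsub i
      _ = (⋃ i ∈ Finset.univ, LV ∩ B i).ncard := by
          induction (Finset.univ : Finset (Fin k)) using Finset.induction with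
          | empty => simp
          | @insert a s hx ih =>
            rw [Finset.sum_insert hx, ih, Finset.set_biUnion_insert]
            rw [Set.ncard_union_eq _ (Set.toFinite _) (Set.toFinite _)]
            apply Set.disjoint_iUnion₂_right.mpr
            intro j hj
            exact Set.disjoint_of_subset inter_subset_right inter_subset_right
              (hBdisj a j (by rintro rfl; exact hx hj))
      _ ≤ LV.ncard := by
          apply Set.ncard_le_ncard _ (Set.toFinite _)
          intro x hx
          simp only [Set.mem_iUnion] at hx
          obtain ⟨i, _, hxi, _⟩ := hx
          exact hxi
  -- conclude
  calc (∑ i : Fin k, ((LT i).ncard : ℝ)) ≤ ∑ i : Fin k, ρ * (LS i).ncard :=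
        Finset.sum_le_sum fun i _ => hratio i
    _ = ρ * ∑ i : Fin k, ((LS i).ncard : ℝ) := by rw [Finset.mul_sum]
    _ ≤ ρ * LV.ncard := by
        apply mul_le_mul_of_nonneg_left _ (le_trans zero_le_one hρ)
        exact_mod_cast key
end
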